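/- Let d ≥ 2 and g, r ∈ GL(d, ℝ). Suppose g = k D k' and g r = k̂ D̂ k̂' are singular value decompositions, where k, k', k̂, k̂' are orthogonal d × d matrices and D, D̂ are diagonal with decreasing positive entries. Then 1 − ⟨k e₁, k̂ e₁⟩² ≤ (d − 1) · (σ₁(r) σ₁(r⁻¹))² · (D₂₂/D₁₁)². In particular, the sine of the angle between the Cartan attractors of g r and of g is at most √(d−1) · σ₁(r) σ₁(r⁻¹) · σ₂(g)/σ₁(g). -/

import Mathlib

open Matrix

/-- The list of singular values of a real square matrix, in decreasing order
(the square roots of the eigenvalues of `Aᴴ * A`). -/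
noncomputable def svalList {n : Type*} [Fintype n] [DecidableEq n]
    (A : Matrix n n ℝ) : List ℝ :=
  (Multiset.sort
    (Finset.univ.val.map fun i =>
      Real.sqrt ((Matrix.isHermitian_conjTranspose_mul_self A).eigenvalues i)) (· ≤ ·)).reverse

/-- `sval j A` is the `j`-th largest singular value `σⱼ(A)` of `A` (1-indexed). -/
noncomputable def sval {n : Type*} [Fintype n] [DecidableEq n]
    (j : ℕ) (A : Matrix n n ℝ) : ℝ :=
  (svalList A).getD (j - 1) 0

lemma sqrt_eig_le_sval_one {n : Type*} [Fintype n] [DecidableEq n]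
    (A : Matrix n n ℝ) (i : n) :
    Real.sqrt ((Matrix.isHermitian_conjTranspose_mul_self A).eigenvalues i) ≤ sval 1 A := by
  set f : n → ℝ := fun i =>
    Real.sqrt ((Matrix.isHermitian_conjTranspose_mul_self A).eigenvalues i) with hf
  have hmem : f i ∈ Multiset.sort (Finset.univ.val.map f) (· ≤ ·) := by
    rw [Multiset.mem_sort]
    exact Multiset.mem_map.2 ⟨i, Finset.mem_univ i, rfl⟩
  have hs : (Multiset.sort (Finset.univ.val.map f) (· ≤ ·)).Pairwise (· ≤ ·) :=
    by exact Multiset.pairwise_sort ..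
  have hrev : ((Multiset.sort (Finset.univ.val.map f) (· ≤ ·)).reverse).Pairwise
      (fun a b => b ≤ a) := by
    rw [List.pairwise_reverse]; exact hs
  have hmemrev : f i ∈ (Multiset.sort (Finset.univ.val.map f) (· ≤ ·)).reverse :=
    List.mem_reverse.2 hmem
  show f i ≤ (svalList A).getD 0 0
  have hsl : svalList A = (Multiset.sort (Finset.univ.val.map f) (· ≤ ·)).reverse := rfl
  rcases hl : (Multiset.sort (Finset.univ.val.map f) (· ≤ ·)).reverse with _ | ⟨b, t⟩
  · rw [hl] at hmemrev; simp at hmemrev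
  · rw [hl] at hmemrev hrev
    rw [hsl, hl]
    simp only [List.getD_cons_zero]
    rcases List.mem_cons.1 hmemrev with h | h
    · exact le_of_eq h
    · exact List.rel_of_pairwise_cons hrev h

lemma dot_mulVec_orth {n : Type*} [Fintype n] [DecidableEq n]
    {M : Matrix n n ℝ} (hM : Mᵀ * M = 1) (v : n → ℝ) :
    (M *ᵥ v) ⬝ᵥ (M *ᵥ v) = v ⬝ᵥ v := by
  rw [dotProduct_mulVec, ← mulVec_transpose, mulVec_mulVec, hM, one_mulVec]

lemma mulVec_dot_le {n : Type*} [Fintype n] [DecidableEq n]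
    (A : Matrix n n ℝ) (v : n → ℝ) :
    (A *ᵥ v) ⬝ᵥ (A *ᵥ v) ≤ (sval 1 A) ^ 2 * (v ⬝ᵥ v) := by
  have hA := Matrix.isHermitian_conjTranspose_mul_self A
  have h1 : (A *ᵥ v) ⬝ᵥ (A *ᵥ v) = v ⬝ᵥ ((Aᴴ * A) *ᵥ v) := by
    rw [conjTranspose_eq_transpose_of_trivial, dotProduct_mulVec, ← mulVec_transpose,
      mulVec_mulVec, dotProduct_comm]
  set U : Matrix n n ℝ := (Matrix.IsHermitian.eigenvectorUnitary hA : Matrix n n ℝ) with hU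
  have hUmem := (Matrix.IsHermitian.eigenvectorUnitary hA).2
  have hUV : U * star U = 1 := (Matrix.mem_unitaryGroup_iff).mp hUmem
  have hVU : star U * U = 1 := (Matrix.mem_unitaryGroup_iff').mp hUmem
  have hsp : Aᴴ * A = U * diagonal hA.eigenvalues * star U := by
    have := hA.spectral_theorem
    simp at this ⊢; exact this
  have hstar : star U = Uᵀ := by
    rw [Matrix.star_eq_conjTranspose, conjTranspose_eq_transpose_of_trivial]
  set w : n → ℝ := Uᵀ *ᵥ v with hw
  have h2 : v ⬝ᵥ ((Aᴴ * A) *ᵥ v) = w ⬝ᵥ (diagonal hA.eigenvalues *ᵥ w) := by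
    conv_lhs => rw [hsp]
    rw [hstar, Matrix.mul_assoc, ← mulVec_mulVec, dotProduct_mulVec,
      ← mulVec_transpose, ← mulVec_mulVec]
  have hww : w ⬝ᵥ w = v ⬝ᵥ v := by
    apply dot_mulVec_orth
    rw [transpose_transpose, ← hstar, hUV]
  have hC : ∀ i, hA.eigenvalues i ≤ (sval 1 A) ^ 2 := by
    intro i
    have h0 : 0 ≤ hA.eigenvalues i := A.eigenvalues_conjTranspose_mul_self_nonneg i
    have := sqrt_eig_le_sval_one A i
    nlinarith [Real.sq_sqrt h0, Real.sqrt_nonneg (hA.eigenvalues i)]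
  rw [h1, h2, ← hww]
  simp only [dotProduct, mulVec_diagonal, Finset.mul_sum]
  apply Finset.sum_le_sum
  intro i _
  have : hA.eigenvalues i * w i * w i ≤ (sval 1 A) ^ 2 * (w i * w i) := by
    rcases le_or_gt 0 (w i * w i) with h | h
    · nlinarith [hC i]
    · nlinarith [mul_self_nonneg (w i)]
  linarith [this]

set_option maxHeartbeats 1000000 in
/-- Let `d ≥ 2` and `g, r ∈ GL(d, ℝ)`, with singular value decompositions
`g = k D k'` and `g r = k̂ D̂ k̂'`.  Then
`1 − ⟨k e₁, k̂ e₁⟩² ≤ (d − 1) (σ₁(r) σ₁(r⁻¹))² (D₂₂/D₁₁)²`; i.e. the sine of the angle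
between the Cartan attractors of `g r` and of `g` is at most
`√(d−1) σ₁(r) σ₁(r⁻¹) σ₂(g)/σ₁(g)`. -/
theorem sine_angle_cartan_attractors_mul
    (d : ℕ) (hd : 2 ≤ d)
    (g r : Matrix (Fin d) (Fin d) ℝ) (hg_unit : IsUnit g.det) (hr_unit : IsUnit r.det)
    (k k' khat khat' : Matrix (Fin d) (Fin d) ℝ)
    (hk : k * kᵀ = 1) (hk' : k' * k'ᵀ = 1)
    (hkhat : khat * khatᵀ = 1) (hkhat' : khat' * khat'ᵀ = 1)
    (D Dhat : Fin d → ℝ)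
    (hDpos : ∀ i, 0 < D i) (hDanti : ∀ i j : Fin d, i ≤ j → D j ≤ D i)
    (hDhatpos : ∀ i, 0 < Dhat i) (hDhatanti : ∀ i j : Fin d, i ≤ j → Dhat j ≤ Dhat i)
    (hgdec : g = k * Matrix.diagonal D * k')
    (hgrdec : g * r = khat * Matrix.diagonal Dhat * khat') :
    1 - ((fun i => k i ⟨0, by omega⟩) ⬝ᵥ fun i => khat i ⟨0, by omega⟩) ^ 2 ≤
      ((d : ℝ) - 1) * (sval 1 r * sval 1 r⁻¹) ^ 2 *
        (D ⟨1, by omega⟩ / D ⟨0, by omega⟩) ^ 2 := by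
  have hd0 : 0 < d := by omega
  have hd1 : 1 < d := by omega
  set i0 : Fin d := ⟨0, hd0⟩ with hi0
  set i1 : Fin d := ⟨1, hd1⟩ with hi1
  have hkT : kᵀ * k = 1 := mul_eq_one_comm.mp hk
  have hk'T : k'ᵀ * k' = 1 := mul_eq_one_comm.mp hk'
  have hkhatT : khatᵀ * khat = 1 := mul_eq_one_comm.mp hkhat
  have hkhat'T : khat'ᵀ * khat' = 1 := mul_eq_one_comm.mp hkhat'
  set e : Fin d → ℝ := Pi.single i0 1 with he
  have hee : e ⬝ᵥ e = 1 := by simp [he, dotProduct, Pi.single_apply]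
  set uhat : Fin d → ℝ := khat *ᵥ e with huhat_def
  set vhat : Fin d → ℝ := khat'ᵀ *ᵥ e with hvhat_def
  set u : Fin d → ℝ := k *ᵥ e with hu_def
  set w0 : Fin d → ℝ := k'ᵀ *ᵥ e with hw0_def
  set x : Fin d → ℝ := k' *ᵥ (r *ᵥ vhat) with hx_def
  set y : Fin d → ℝ := kᵀ *ᵥ uhat with hy_def
  -- step 1 : (g*r) vhat = Dhat i0 • uhat
  have hsingle : Pi.single i0 (Dhat i0 * 1) = Dhat i0 • e := by
    funext j
    by_cases hj : j = i0 <;> simp [he, Pi.single_apply, hj]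
  have h1 : (g * r) *ᵥ vhat = Dhat i0 • uhat := by
    calc (g * r) *ᵥ vhat = ((g * r) * khat'ᵀ) *ᵥ e := by
          rw [hvhat_def, mulVec_mulVec]
      _ = (khat * diagonal Dhat) *ᵥ e := by
          rw [hgrdec, Matrix.mul_assoc (khat * diagonal Dhat), hkhat', Matrix.mul_one]
      _ = khat *ᵥ (diagonal Dhat *ᵥ e) := by rw [mulVec_mulVec]
      _ = khat *ᵥ (Dhat i0 • e) := by rw [he, diagonal_mulVec_single, ← he, hsingle]
      _ = Dhat i0 • uhat := by rw [mulVec_smul, huhat_def]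
  -- step 2 : diagonal D *ᵥ x = Dhat i0 • y
  have hkg : kᵀ * (g * r) = diagonal D * k' * r := by
    rw [hgdec]
    simp only [← Matrix.mul_assoc]
    rw [hkT, Matrix.one_mul]
  have h2 : diagonal D *ᵥ x = Dhat i0 • y := by
    calc diagonal D *ᵥ x = ((diagonal D * k') * r) *ᵥ vhat := by
          rw [hx_def, mulVec_mulVec, mulVec_mulVec]
      _ = kᵀ *ᵥ ((g * r) *ᵥ vhat) := by rw [← hkg]; simp only [hvhat_def, mulVec_mulVec, Matrix.mul_assoc]
      _ = kᵀ *ᵥ (Dhat i0 • uhat) := by rw [h1]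
      _ = Dhat i0 • y := by rw [mulVec_smul, hy_def]
  have h3 : ∀ i, D i * x i = Dhat i0 * y i := by
    intro i
    have := congrFun h2 i
    simpa [mulVec_diagonal, Pi.smul_apply, smul_eq_mul] using this
  -- norms
  have huhat : uhat ⬝ᵥ uhat = 1 := by rw [huhat_def, dot_mulVec_orth hkhatT e, hee]
  have hyy : y ⬝ᵥ y = 1 := by
    rw [hy_def, dot_mulVec_orth (by rw [transpose_transpose, hk]) uhat, huhat]
  have hvv : vhat ⬝ᵥ vhat = 1 := by
    rw [hvhat_def, dot_mulVec_orth (by rw [transpose_transpose, hkhat']) e, hee]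
  have hww0 : w0 ⬝ᵥ w0 = 1 := by
    rw [hw0_def, dot_mulVec_orth (by rw [transpose_transpose, hk']) e, hee]
  have huu : u ⬝ᵥ u = 1 := by rw [hu_def, dot_mulVec_orth hkT e, hee]
  have hx_le : x ⬝ᵥ x ≤ (sval 1 r) ^ 2 := by
    rw [hx_def, dot_mulVec_orth hk'T]
    have := mulVec_dot_le r vhat
    rwa [hvv, mul_one] at this
  -- y i0 is the dot product in the statement
  have hyc : y i0 = ((fun i => k i i0) ⬝ᵥ fun i => khat i i0) := by
    simp [hy_def, huhat_def, mulVec, dotProduct, transpose_apply, he, Pi.single_apply,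
      mul_ite, mul_one, mul_zero]
  -- sum split
  have hsum : ∑ i, y i * y i = 1 := by rw [← hyy]; rfl
  have hsplit : ∑ i ∈ Finset.univ.erase i0, y i * y i = 1 - y i0 * y i0 := by
    have h := Finset.add_sum_erase Finset.univ (fun i => y i * y i) (Finset.mem_univ i0)
    linarith
  have hs_nonneg : 0 ≤ 1 - y i0 * y i0 := by
    rw [← hsplit]
    exact Finset.sum_nonneg fun i _ => mul_self_nonneg _
  -- key1
  have key1 : (Dhat i0) ^ 2 * (1 - y i0 * y i0) ≤ (D i1) ^ 2 * (sval 1 r) ^ 2 := by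
    have e1 : (Dhat i0) ^ 2 * (1 - y i0 * y i0)
        = ∑ i ∈ Finset.univ.erase i0, (Dhat i0 * y i) * (Dhat i0 * y i) := by
      rw [← hsplit, Finset.mul_sum]
      exact Finset.sum_congr rfl fun i _ => by ring
    have e2 : ∑ i ∈ Finset.univ.erase i0, (Dhat i0 * y i) * (Dhat i0 * y i)
        = ∑ i ∈ Finset.univ.erase i0, (D i * x i) * (D i * x i) :=
      Finset.sum_congr rfl fun i _ => by rw [h3 i]
    have e3 : ∑ i ∈ Finset.univ.erase i0, (D i * x i) * (D i * x i)
        ≤ ∑ i ∈ Finset.univ.erase i0, (D i1) ^ 2 * (x i * x i) := by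
      apply Finset.sum_le_sum
      intro i hi
      have hne : i ≠ i0 := Finset.ne_of_mem_erase hi
      have hle : i1 ≤ i := by
        rw [Fin.le_def]
        have : i.val ≠ 0 := fun h => hne (Fin.ext h)
        simp only [hi1]
        omega
      have hD : D i ≤ D i1 := hDanti i1 i hle
      have hDD : D i * D i ≤ D i1 * D i1 :=
        mul_le_mul hD hD (hDpos i).le ((hDpos i).le.trans hD)
      nlinarith [hDD, mul_self_nonneg (x i)]
    have e4 : ∑ i ∈ Finset.univ.erase i0, (D i1) ^ 2 * (x i * x i)
        ≤ (D i1) ^ 2 * (sval 1 r) ^ 2 := by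
      have h5 : ∑ i ∈ Finset.univ.erase i0, (D i1) ^ 2 * (x i * x i)
          ≤ ∑ i, (D i1) ^ 2 * (x i * x i) := by
        apply Finset.sum_le_sum_of_subset_of_nonneg (Finset.erase_subset _ _)
        intro i _ _
        exact mul_nonneg (sq_nonneg _) (mul_self_nonneg _)
      have h6 : ∑ i, (D i1) ^ 2 * (x i * x i) = (D i1) ^ 2 * (x ⬝ᵥ x) := by
        simp [dotProduct, Finset.mul_sum]
      have h7 : (D i1) ^ 2 * (x ⬝ᵥ x) ≤ (D i1) ^ 2 * (sval 1 r) ^ 2 :=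
        mul_le_mul_of_nonneg_left hx_le (by positivity)
      linarith
    linarith [e1, e2, e3, e4, le_of_eq e1]
  -- key2
  have hgw0 : g *ᵥ w0 = D i0 • u := by
    calc g *ᵥ w0 = (g * k'ᵀ) *ᵥ e := by rw [hw0_def, mulVec_mulVec]
      _ = (k * diagonal D) *ᵥ e := by
          rw [hgdec, Matrix.mul_assoc (k * diagonal D), hk', Matrix.mul_one]
      _ = k *ᵥ (diagonal D *ᵥ e) := by rw [mulVec_mulVec]
      _ = k *ᵥ (D i0 • e) := by
          have hsingleD : Pi.single i0 (D i0 * 1) = D i0 • e := by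
            funext j
            by_cases hj : j = i0 <;> simp [he, Pi.single_apply, hj]
          rw [he, diagonal_mulVec_single, ← he, hsingleD]
      _ = D i0 • u := by rw [mulVec_smul, hu_def]
  have hnorm_gw0 : (g *ᵥ w0) ⬝ᵥ (g *ᵥ w0) = (D i0) ^ 2 := by
    rw [hgw0, smul_dotProduct, dotProduct_smul, huu]
    simp [pow_two]
  have hr_factor : g *ᵥ w0 = (g * r) *ᵥ (r⁻¹ *ᵥ w0) := by
    conv_rhs => rw [mulVec_mulVec, Matrix.mul_assoc, mul_nonsing_inv r hr_unit, Matrix.mul_one]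
  have hgr_bound : ∀ z : Fin d → ℝ,
      ((g * r) *ᵥ z) ⬝ᵥ ((g * r) *ᵥ z) ≤ (Dhat i0) ^ 2 * (z ⬝ᵥ z) := by
    intro z
    have hz : (g * r) *ᵥ z = khat *ᵥ (diagonal Dhat *ᵥ (khat' *ᵥ z)) := by
      rw [hgrdec]; simp only [mulVec_mulVec, Matrix.mul_assoc]
    rw [hz, dot_mulVec_orth hkhatT]
    have hpz : (khat' *ᵥ z) ⬝ᵥ (khat' *ᵥ z) = z ⬝ᵥ z := dot_mulVec_orth hkhat'T z
    rw [← hpz]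
    simp only [dotProduct, mulVec_diagonal, Finset.mul_sum]
    apply Finset.sum_le_sum
    intro i _
    have h01 : Dhat i ≤ Dhat i0 := hDhatanti i0 i (by rw [Fin.le_def]; simp [hi0])
    have hDD : Dhat i * Dhat i ≤ Dhat i0 * Dhat i0 :=
      mul_le_mul h01 h01 (hDhatpos i).le ((hDhatpos i).le.trans h01)
    nlinarith [hDD, mul_self_nonneg ((khat' *ᵥ z) i)]
  have key2 : (D i0) ^ 2 ≤ (Dhat i0) ^ 2 * (sval 1 r⁻¹) ^ 2 := by
    have b1 : (D i0) ^ 2 ≤ (Dhat i0) ^ 2 * ((r⁻¹ *ᵥ w0) ⬝ᵥ (r⁻¹ *ᵥ w0)) := by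
      rw [← hnorm_gw0, hr_factor]
      exact hgr_bound _
    have b2 : (r⁻¹ *ᵥ w0) ⬝ᵥ (r⁻¹ *ᵥ w0) ≤ (sval 1 r⁻¹) ^ 2 := by
      have := mulVec_dot_le r⁻¹ w0
      rwa [hww0, mul_one] at this
    calc (D i0) ^ 2 ≤ (Dhat i0) ^ 2 * ((r⁻¹ *ᵥ w0) ⬝ᵥ (r⁻¹ *ᵥ w0)) := b1
      _ ≤ (Dhat i0) ^ 2 * (sval 1 r⁻¹) ^ 2 :=
          mul_le_mul_of_nonneg_left b2 (by positivity)
  -- conclusion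
  have hmain : 1 - ((fun i => k i i0) ⬝ᵥ fun i => khat i i0) ^ 2 ≤
      ((d : ℝ) - 1) * (sval 1 r * sval 1 r⁻¹) ^ 2 * (D i1 / D i0) ^ 2 := by
    rw [← hyc]
    have hP : 0 < D i0 := hDpos i0
    have hQ : 0 < Dhat i0 := hDhatpos i0
    have hT : 0 < D i1 := hDpos i1
    have hdcast : (2 : ℝ) ≤ (d : ℝ) := by exact_mod_cast hd
    rw [div_pow, ← mul_div_assoc, le_div_iff₀ (by positivity)]
    have m1 : (1 - y i0 * y i0) * ((D i0) ^ 2)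
        ≤ (1 - y i0 * y i0) * ((Dhat i0) ^ 2 * (sval 1 r⁻¹) ^ 2) :=
      mul_le_mul_of_nonneg_left key2 hs_nonneg
    have m2 : ((Dhat i0) ^ 2 * (1 - y i0 * y i0)) * (sval 1 r⁻¹) ^ 2
        ≤ ((D i1) ^ 2 * (sval 1 r) ^ 2) * (sval 1 r⁻¹) ^ 2 :=
      mul_le_mul_of_nonneg_right key1 (by positivity)
    have hsq : 0 ≤ (D i1 * sval 1 r * sval 1 r⁻¹) ^ 2 := sq_nonneg _
    nlinarith [m1, m2, hsq, sq_nonneg (y i0)]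
  exact hmain
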